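/- Let Ψ > 0 and fix x ∈ ℝ. For every y ∈ ℝ, the function y ↦ arcsinh(x/√(Ψ² + y²)) + (y/Ψ)·arctan(x·y/(Ψ·√(Ψ² + x² + y²))) is differentiable at y with derivative (1/Ψ)·arctan(x·y/(Ψ·√(Ψ² + x² + y²))). -/

import Mathlib

open Real

theorem stmt_3 (Ψ x : ℝ) (hΨ : 0 < Ψ) (y : ℝ) :
    HasDerivAt
      (fun y : ℝ =>
        Real.arsinh (x / Real.sqrt (Ψ ^ 2 + y ^ 2)) +
          (y / Ψ) * Real.arctan (x * y / (Ψ * Real.sqrt (Ψ ^ 2 + x ^ 2 + y ^ 2))))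
      ((1 / Ψ) * Real.arctan (x * y / (Ψ * Real.sqrt (Ψ ^ 2 + x ^ 2 + y ^ 2)))) y := by
  have hs : (0:ℝ) < Ψ ^ 2 + y ^ 2 := by positivity
  have ht : (0:ℝ) < Ψ ^ 2 + x ^ 2 + y ^ 2 := by positivity
  set S := Real.sqrt (Ψ ^ 2 + y ^ 2) with hSdef
  set T := Real.sqrt (Ψ ^ 2 + x ^ 2 + y ^ 2) with hTdef
  have hS0 : 0 < S := Real.sqrt_pos.mpr hs
  have hT0 : 0 < T := Real.sqrt_pos.mpr ht
  have hS2 : S ^ 2 = Ψ ^ 2 + y ^ 2 := Real.sq_sqrt hs.le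
  have hT2 : T ^ 2 = Ψ ^ 2 + x ^ 2 + y ^ 2 := Real.sq_sqrt ht.le
  -- derivative of inner Ψ² + y²
  have h1 : HasDerivAt (fun y : ℝ => Ψ ^ 2 + y ^ 2) (2 * y) y := by
    simpa using (hasDerivAt_pow 2 y).const_add (Ψ ^ 2)
  have h2 : HasDerivAt (fun y : ℝ => Real.sqrt (Ψ ^ 2 + y ^ 2)) (2 * y / (2 * S)) y :=
    h1.sqrt hs.ne'
  have h3 : HasDerivAt (fun y : ℝ => x / Real.sqrt (Ψ ^ 2 + y ^ 2))
      ((0 * S - x * (2 * y / (2 * S))) / S ^ 2) y :=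
    (hasDerivAt_const y x).div h2 hS0.ne'
  have hAux : Real.sqrt (1 + (x / S) ^ 2) = T / S := by
    rw [show (1 : ℝ) + (x / S) ^ 2 = (T / S) ^ 2 by
      field_simp
      rw [hS2, hT2]; ring]
    exact Real.sqrt_sq (by positivity)
  have h4 : HasDerivAt (fun y : ℝ => Real.arsinh (x / Real.sqrt (Ψ ^ 2 + y ^ 2)))
      ((T / S)⁻¹ * ((0 * S - x * (2 * y / (2 * S))) / S ^ 2)) y := by
    have := (Real.hasDerivAt_arsinh (x / S)).comp y h3
    rwa [hAux] at this
  -- inner function of arctan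
  have h1' : HasDerivAt (fun y : ℝ => Ψ ^ 2 + x ^ 2 + y ^ 2) (2 * y) y := by
    simpa using (hasDerivAt_pow 2 y).const_add (Ψ ^ 2 + x ^ 2)
  have h2' : HasDerivAt (fun y : ℝ => Ψ * Real.sqrt (Ψ ^ 2 + x ^ 2 + y ^ 2))
      (Ψ * (2 * y / (2 * T))) y := (h1'.sqrt ht.ne').const_mul Ψ
  have hnum : HasDerivAt (fun y : ℝ => x * y) x y := by
    simpa using (hasDerivAt_id y).const_mul x
  have h5 : HasDerivAt (fun y : ℝ => x * y / (Ψ * Real.sqrt (Ψ ^ 2 + x ^ 2 + y ^ 2)))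
      ((x * (Ψ * T) - x * y * (Ψ * (2 * y / (2 * T)))) / (Ψ * T) ^ 2) y :=
    hnum.div h2' (by positivity)
  have h6 : HasDerivAt
      (fun y : ℝ => Real.arctan (x * y / (Ψ * Real.sqrt (Ψ ^ 2 + x ^ 2 + y ^ 2))))
      ((1 / (1 + (x * y / (Ψ * T)) ^ 2)) *
        ((x * (Ψ * T) - x * y * (Ψ * (2 * y / (2 * T)))) / (Ψ * T) ^ 2)) y :=
    by have := (Real.hasDerivAt_arctan (x * y / (Ψ * T))).comp y h5; exact this
  have h7 : HasDerivAt (fun y : ℝ => y / Ψ) (1 / Ψ) y := by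
    simpa using (hasDerivAt_id y).div_const Ψ
  have htot := h4.add (h7.mul h6)
  have hv : 1 + (x * y / (Ψ * T)) ^ 2 = (Ψ ^ 2 + x ^ 2) * (Ψ ^ 2 + y ^ 2) / (Ψ ^ 2 * T ^ 2) := by
    field_simp
    linear_combination Ψ ^ 2 * hT2
  have key : (T / S)⁻¹ * ((0 * S - x * (2 * y / (2 * S))) / S ^ 2) +
      y / Ψ * (1 / (1 + (x * y / (Ψ * T)) ^ 2) *
        ((x * (Ψ * T) - x * y * (Ψ * (2 * y / (2 * T)))) / (Ψ * T) ^ 2)) = 0 := by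
    rw [hv]
    have hx2 : (0:ℝ) < Ψ ^ 2 + x ^ 2 := by positivity
    field_simp
    linear_combination (x * y * S ^ 2) * hT2 +
      (x * y * (Ψ ^ 2 + x ^ 2)) * hS2
  refine htot.congr_deriv ?_
  rw [← hTdef]
  linarith [key]
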